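/- Let $d_n = (2! \cdot 3! \cdots n!)^4 \cdot (n+1)!$. For any positive integers $n_1, n_2, \ldots, n_k$, the number $k! \cdot d_{n_1} \cdot d_{n_2} \cdots d_{n_k}$ divides $d_{n_1 + n_2 + \cdots + n_k}$. -/

import Mathlib

/-- `d n = (2! ⋯ n!)^4 * (n+1)!` -/
def d (n : ℕ) : ℕ := (∏ k ∈ Finset.Icc 2 n, Nat.factorial k) ^ 4 * Nat.factorial (n + 1)

lemma d_succ (n : ℕ) (hn : 1 ≤ n) : d (n + 1) = d n * (Nat.factorial (n + 1) ^ 4 * (n + 2)) := by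
  unfold d
  rw [Finset.prod_Icc_succ_top (by omega : 2 ≤ n + 1), Nat.factorial_succ (n + 1)]
  ring

lemma key_dvd (p q : ℕ) (hp : 1 ≤ p) (hq : 1 ≤ q) :
    Nat.factorial (p + q) * (d p * d q) ∣ d (p + q) := by
  induction q, hq using Nat.le_induction with
  | base =>
    have hd1 : d 1 = 2 := by simp [d]
    rw [hd1, d_succ p hp]
    obtain ⟨c, hc⟩ := Nat.dvd_factorial (show 0 < 2 by norm_num) (show 2 ≤ p + 1 by omega)
    exact ⟨Nat.factorial (p + 1) ^ 2 * c * (p + 2), by rw [hc]; ring⟩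
  | succ q hq ih =>
    rw [← Nat.add_assoc, d_succ (p + q) (by omega), d_succ q hq]
    obtain ⟨c, hc⟩ := ih
    have core : Nat.factorial (p + q + 1) * (Nat.factorial (q + 1) ^ 4 * (q + 2)) ∣
        Nat.factorial (p + q) * (Nat.factorial (p + q + 1) ^ 4 * (p + q + 2)) := by
      have h1 : Nat.factorial (q + 1) ^ 3 * Nat.factorial (q + 2) ∣
          Nat.factorial (p + q) ^ 3 * Nat.factorial (p + q + 1) :=
        mul_dvd_mul (pow_dvd_pow_of_dvd (Nat.factorial_dvd_factorial (by omega)) 3)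
          (Nat.factorial_dvd_factorial (by omega))
      obtain ⟨e, he⟩ := h1
      refine ⟨e * ((p + q + 1) ^ 2 * (p + q + 2)), ?_⟩
      have h2 : Nat.factorial (q + 1) ^ 4 * (q + 2) =
          Nat.factorial (q + 1) ^ 3 * Nat.factorial (q + 2) := by
        rw [Nat.factorial_succ (q + 1)]; ring
      rw [h2]
      calc Nat.factorial (p + q) * (Nat.factorial (p + q + 1) ^ 4 * (p + q + 2))
          = (Nat.factorial (p + q) ^ 3 * Nat.factorial (p + q + 1)) *
            (Nat.factorial (p + q + 1) * ((p + q + 1) ^ 2 * (p + q + 2))) := by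
            rw [Nat.factorial_succ (p + q)]; ring
        _ = Nat.factorial (q + 1) ^ 3 * Nat.factorial (q + 2) * e *
            (Nat.factorial (p + q + 1) * ((p + q + 1) ^ 2 * (p + q + 2))) := by rw [he]
        _ = Nat.factorial (p + q + 1) * (Nat.factorial (q + 1) ^ 3 * Nat.factorial (q + 2)) *
            (e * ((p + q + 1) ^ 2 * (p + q + 2))) := by ring
    obtain ⟨e, he⟩ := core
    refine ⟨e * c, ?_⟩
    calc d (p + q) * (Nat.factorial (p + q + 1) ^ 4 * (p + q + 2))
        = Nat.factorial (p + q) * (d p * d q) * c *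
          (Nat.factorial (p + q + 1) ^ 4 * (p + q + 2)) := by rw [hc]
      _ = (Nat.factorial (p + q) * (Nat.factorial (p + q + 1) ^ 4 * (p + q + 2))) *
          (d p * d q * c) := by ring
      _ = (Nat.factorial (p + q + 1) * (Nat.factorial (q + 1) ^ 4 * (q + 2)) * e) *
          (d p * d q * c) := by rw [he]
      _ = Nat.factorial (p + q + 1) * (d p * (d q * (Nat.factorial (q + 1) ^ 4 * (q + 2)))) *
          (e * c) := by ring

theorem factorial_mul_prod_d_dvd (l : List ℕ) (hl : ∀ m ∈ l, 0 < m) :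
    Nat.factorial l.length * (l.map d).prod ∣ d l.sum := by
  induction l with
  | nil => simp [d]
  | cons a t ih =>
    have ha : 1 ≤ a := hl a List.mem_cons_self
    have iht := ih (fun m hm => hl m (List.mem_cons_of_mem _ hm))
    simp only [List.length_cons, List.map_cons, List.prod_cons, List.sum_cons]
    by_cases ht : t = []
    · subst ht; simp [Nat.factorial]
    · have hlen : 1 ≤ t.length := List.length_pos_iff.mpr ht
      have hls : t.length ≤ t.sum :=
        List.length_le_sum_of_one_le t (fun m hm => hl m (List.mem_cons_of_mem _ hm))
      have hs : 1 ≤ t.sum := le_trans hlen hls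
      have h1 : (t.map d).prod ∣ d t.sum :=
        dvd_trans (dvd_mul_left _ _) iht
      have h2 : Nat.factorial (t.length + 1) ∣ Nat.factorial (a + t.sum) :=
        Nat.factorial_dvd_factorial (by omega)
      calc Nat.factorial (t.length + 1) * (d a * (t.map d).prod)
          ∣ Nat.factorial (a + t.sum) * (d a * d t.sum) :=
            mul_dvd_mul h2 (mul_dvd_mul_left _ h1)
        _ ∣ d (a + t.sum) := key_dvd a t.sum ha hs
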